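/- Let k be a field, G a finite group with |G| invertible in k, and A a finitely generated commutative k-algebra on which G acts by k-algebra automorphisms. Then the invariant ring A^G is a finitely generated k-algebra. -/

import Mathlib

/-- The subalgebra of `G`-invariant elements of a `k`-algebra `A`. -/
def fixedSubalgebra (G : Type*) (k A : Type*) [Monoid G] [CommSemiring k] [CommRing A]
    [Algebra k A] [MulSemiringAction G A] [SMulCommClass G k A] : Subalgebra k A where
  carrier := {a | ∀ g : G, g • a = a}
  mul_mem' := by intro a b ha hb g; rw [smul_mul', ha g, hb g]
  one_mem' := fun g => smul_one g
  add_mem' := by intro a b ha hb g; rw [smul_add, ha g, hb g]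
  zero_mem' := fun g => smul_zero g
  algebraMap_mem' := by
    intro r g
    rw [Algebra.algebraMap_eq_smul_one, smul_comm g r (1 : A), smul_one]

/-- Noether's finiteness theorem: if `A` is a finitely generated `k`-algebra and `G` is a
finite group with `|G|` invertible in `k` acting on `A` by `k`-algebra automorphisms, then
the invariant ring `A^G` is a finitely generated `k`-algebra. -/
theorem invariant_ring_finiteType (k G A : Type*) [Field k] [Group G] [Fintype G]
    [Invertible ((Fintype.card G : k))] [CommRing A] [Algebra k A] [Algebra.FiniteType k A]
    [MulSemiringAction G A] [SMulCommClass G k A] :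
    Algebra.FiniteType k (fixedSubalgebra G k A) := by
  set B := fixedSubalgebra G k A with hB
  -- A is integral over B
  have hint : ∀ a : A, IsIntegral B a := by
    intro a
    have hcoeff : ∀ c ∈ (prodXSubSMul G A a).coeffs, c ∈ B.toSubring := by
      intro c hc g
      obtain ⟨n, _, hn⟩ := Polynomial.mem_coeffs_iff.1 hc
      exact hn.symm ▸ prodXSubSMul.coeff G A a g n
    refine ⟨(prodXSubSMul G A a).toSubring B.toSubring hcoeff, ?_, ?_⟩
    · exact (Polynomial.monic_toSubring _ _ _).2 (prodXSubSMul.monic G A a)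
    · rw [← prodXSubSMul.eval G A a, Polynomial.eval₂_eq_eval_map]
      have h := Polynomial.map_toSubring (prodXSubSMul G A a) B.toSubring hcoeff
      have : algebraMap (↥B) A = B.toSubring.subtype := rfl
      rw [this, h]
  have hft : Algebra.FiniteType B A := Algebra.FiniteType.of_restrictScalars_finiteType k B A
  have hInt : Algebra.IsIntegral B A := ⟨hint⟩
  have hfin : Module.Finite B A := Algebra.IsIntegral.finite
  have hfg : (⊤ : Subalgebra k B).FG := by
    refine fg_of_fg_of_fg k B A ?_ ?_ ?_
    · exact (inferInstance : Algebra.FiniteType k A).1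
    · exact hfin.1
    · exact Subtype.val_injective
  exact ⟨hfg⟩
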